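/- Let V be a nonempty finite type, let w : V → (0, ∞) be a probability vector (Σ_{t ∈ V} w(t) = 1), and let C ⊆ V be a nonempty subset with total mass q = Σ_{t ∈ C} w(t). Let (U_t)_{t ∈ V} be independent real-valued random variables each distributed according to the standard Gumbel distribution, and sort the elements of V in decreasing order of log(w(t)) + U_t (this ordering is almost surely well defined). Let N be the rank (counting from 1) of the first element of C in this ordering, i.e., the number of elements examined until an element of C is reached. Then E[N] ≤ 1/q, and the inequality is strict whenever C ≠ V. -/

import Mathlib

open MeasureTheory ProbabilityTheory
open scoped Classical

section GumbelAux
open Real Set Filter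
open scoped Topology

noncomputable def gF (r x : ℝ) : ℝ := Real.exp (-r * Real.exp (-x))
noncomputable def gd (r x : ℝ) : ℝ := r * Real.exp (-x) * gF r x

lemma gd_nonneg {r : ℝ} (hr : 0 < r) (x : ℝ) : 0 ≤ gd r x := by
  unfold gd gF; positivity

lemma gd_cont (r : ℝ) : Continuous (gd r) := by
  unfold gd gF; fun_prop

lemma gF_cont (r : ℝ) : Continuous (gF r) := by
  unfold gF; fun_prop

lemma gd_le_exp {r : ℝ} (hr : 0 < r) (x : ℝ) : gd r x ≤ 4 / r * Real.exp x := by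
  set t := r * Real.exp (-x) with ht
  have htpos : 0 < t := by positivity
  have h1 : t ^ 2 / 4 ≤ Real.exp t := by
    have h2 : t / 2 + 1 ≤ Real.exp (t / 2) := Real.add_one_le_exp (t / 2)
    have h5 : Real.exp t = Real.exp (t / 2) ^ 2 := by
      rw [← Real.exp_nat_mul]; norm_num; ring_nf
    nlinarith [Real.exp_pos (t/2)]
  have h3 : Real.exp (-t) ≤ 4 / t ^ 2 := by
    rw [Real.exp_neg, inv_le_iff_one_le_mul₀ (Real.exp_pos t)]
    rw [div_mul_eq_mul_div, le_div_iff₀ (by positivity : (0:ℝ) < t^2)]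
    nlinarith
  have h4 : gd r x = t * Real.exp (-t) := by
    unfold gd gF; rw [ht, neg_mul, Real.exp_neg, Real.exp_neg]
  have h6 : t * Real.exp (-t) ≤ 4 / t := by
    rw [le_div_iff₀ htpos]
    calc t * Real.exp (-t) * t = t ^ 2 * Real.exp (-t) := by ring
    _ ≤ t ^ 2 * (4 / t ^ 2) := by
        exact mul_le_mul_of_nonneg_left h3 (by positivity)
    _ = 4 := by field_simp
  have h7 : 4 / t = 4 / r * Real.exp x := by
    rw [ht, Real.exp_neg]; field_simp
  rw [h4]; rw [h7] at h6; exact h6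

lemma gd_integrable {r : ℝ} (hr : 0 < r) : Integrable (gd r) := by
  rw [← integrableOn_univ, ← Set.Iic_union_Ioi (a := (0:ℝ))]
  refine IntegrableOn.union ?_ ?_
  · refine Integrable.mono' ((integrableOn_exp_Iic 0).const_mul (4 / r)) ((gd_cont r).aestronglyMeasurable.restrict) ?_
    filter_upwards with x
    rw [Real.norm_of_nonneg (gd_nonneg hr x)]
    exact gd_le_exp hr x
  · have hb : IntegrableOn (fun x : ℝ => r * Real.exp (-1 * x)) (Ioi 0) :=
      (exp_neg_integrableOn_Ioi 0 one_pos).const_mul r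
    refine Integrable.mono' hb ((gd_cont r).aestronglyMeasurable.restrict) ?_
    filter_upwards with x
    rw [Real.norm_of_nonneg (gd_nonneg hr x)]
    unfold gd gF
    have : Real.exp (-r * Real.exp (-x)) ≤ 1 := by
      apply Real.exp_le_one_iff.mpr; nlinarith [Real.exp_pos (-x)]
    have h2 : (0:ℝ) < Real.exp (-x) := Real.exp_pos _
    have h3 : (0:ℝ) < Real.exp (-r * Real.exp (-x)) := Real.exp_pos _
    rw [neg_one_mul]
    nlinarith [mul_le_of_le_one_right (by positivity : (0:ℝ) ≤ r * Real.exp (-x)) this]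

lemma gF_hasDeriv (r x : ℝ) : HasDerivAt (gF r) (gd r x) x := by
  have h1 : HasDerivAt (fun x : ℝ => -x) (-1) x := (hasDerivAt_id x).neg
  have h2 : HasDerivAt (fun x : ℝ => Real.exp (-x)) (Real.exp (-x) * (-1)) x :=
    (Real.hasDerivAt_exp (-x)).comp x h1
  have h3 : HasDerivAt (fun x : ℝ => -r * Real.exp (-x)) (-r * (Real.exp (-x) * (-1))) x :=
    h2.const_mul (-r)
  have h4 := (Real.hasDerivAt_exp (-r * Real.exp (-x))).comp x h3
  exact h4.congr_deriv (by unfold gd gF; ring)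

lemma gF_tendsto_atBot {r : ℝ} (hr : 0 < r) : Tendsto (gF r) atBot (𝓝 0) := by
  have h0 : Tendsto (fun x : ℝ => Real.exp (-x)) atBot atTop :=
    Real.tendsto_exp_atTop.comp tendsto_neg_atBot_atTop
  have h1 : Tendsto (fun x : ℝ => -r * Real.exp (-x)) atBot atBot := by
    have := tendsto_neg_atTop_atBot.comp (h0.const_mul_atTop hr)
    refine this.congr fun x => ?_
    simp [Function.comp_def, gF]
  exact Real.tendsto_exp_atBot.comp h1

lemma gF_tendsto_atTop (r : ℝ) : Tendsto (gF r) atTop (𝓝 1) := by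
  have h0 : Tendsto (fun x : ℝ => Real.exp (-x)) atTop (𝓝 0) :=
    Real.tendsto_exp_atBot.comp tendsto_neg_atTop_atBot
  have h1 : Tendsto (fun x : ℝ => -r * Real.exp (-x)) atTop (𝓝 0) := by
    simpa using h0.const_mul (-r)
  have := (Real.continuous_exp.tendsto 0).comp h1
  rw [Real.exp_zero] at this
  refine this.congr fun x => ?_
  simp [Function.comp_def, gF]

lemma integral_gd {r : ℝ} (hr : 0 < r) : ∫ x, gd r x = 1 := by
  have := integral_of_hasDerivAt_of_tendsto (fun x => gF_hasDeriv r x) (gd_integrable hr)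
    (gF_tendsto_atBot hr) (gF_tendsto_atTop r)
  simpa using this

lemma integral_gd_Iic {r : ℝ} (hr : 0 < r) (a : ℝ) : ∫ x in Iic a, gd r x = gF r a := by
  have := integral_Iic_of_hasDerivAt_of_tendsto' (a := a) (fun x _ => gF_hasDeriv r x)
    (gd_integrable hr).integrableOn (gF_tendsto_atBot hr)
  simpa using this

lemma gF_mul_gd {q s : ℝ} (hq : 0 < q) (hs : 0 < s) (x : ℝ) :
    gF q x * gd s x = s / (q + s) * gd (q + s) x := by
  have hqs : q + s ≠ 0 := by positivity
  simp only [gF, gd]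
  rw [show -q * Real.exp (-x) = -(q * Real.exp (-x)) by ring,
    show -s * Real.exp (-x) = -(s * Real.exp (-x)) by ring,
    show -(q+s) * Real.exp (-x) = -(q * Real.exp (-x)) + -(s * Real.exp (-x)) by ring,
    Real.exp_add]
  field_simp

lemma integrable_gF_mul_gd {q s : ℝ} (hq : 0 < q) (hs : 0 < s) :
    Integrable (fun x => gF q x * gd s x) := by
  have : (fun x => gF q x * gd s x) = fun x => s / (q + s) * gd (q + s) x :=
    funext (gF_mul_gd hq hs)
  rw [this]
  exact (gd_integrable (by positivity)).const_mul _

lemma integral_gF_mul_gd {q s : ℝ} (hq : 0 < q) (hs : 0 < s) :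
    ∫ x, gF q x * gd s x = s / (q + s) := by
  simp only [fun x => gF_mul_gd hq hs x]
  rw [MeasureTheory.integral_const_mul, integral_gd (by positivity), mul_one]

noncomputable def gMeas (r : ℝ) : Measure ℝ :=
  volume.withDensity fun x => ENNReal.ofReal (gd r x)

lemma gMeas_apply {r : ℝ} (hr : 0 < r) {s : Set ℝ} (hs : MeasurableSet s) :
    gMeas r s = ENNReal.ofReal (∫ x in s, gd r x) := by
  rw [gMeas, withDensity_apply _ hs,
    ← ofReal_integral_eq_lintegral_ofReal (gd_integrable hr).integrableOn
      (Filter.Eventually.of_forall (gd_nonneg hr))]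

lemma gMeas_Iic {r : ℝ} (hr : 0 < r) (a : ℝ) :
    gMeas r (Iic a) = ENNReal.ofReal (gF r a) := by
  rw [gMeas_apply hr measurableSet_Iic, integral_gd_Iic hr]

lemma gMeas_Iio {r : ℝ} (hr : 0 < r) (a : ℝ) :
    gMeas r (Iio a) = ENNReal.ofReal (gF r a) := by
  rw [gMeas_apply hr measurableSet_Iio, setIntegral_congr_set Iio_ae_eq_Iic,
    integral_gd_Iic hr]

lemma gMeas_univ {r : ℝ} (hr : 0 < r) : gMeas r univ = 1 := by
  rw [gMeas_apply hr MeasurableSet.univ, setIntegral_univ, integral_gd hr,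
    ENNReal.ofReal_one]

lemma gMeas_prob {r : ℝ} (hr : 0 < r) : IsProbabilityMeasure (gMeas r) :=
  ⟨gMeas_univ hr⟩

lemma gMeas_prod_lt {q s : ℝ} (hq : 0 < q) (hs : 0 < s) :
    ((gMeas q).prod (gMeas s)) {p : ℝ × ℝ | p.1 < p.2} = ENNReal.ofReal (s / (q + s)) := by
  haveI := gMeas_prob hq
  haveI := gMeas_prob hs
  rw [Measure.prod_apply_symm (measurableSet_lt measurable_fst measurable_snd)]
  have hpre : ∀ y : ℝ, (fun x => (x, y)) ⁻¹' {p : ℝ × ℝ | p.1 < p.2} = Iio y := by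
    intro y; ext x; simp [Set.mem_Iio]
  simp only [hpre]
  have h1 : ∀ y : ℝ, gMeas q (Iio y) = ENNReal.ofReal (gF q y) := gMeas_Iio hq
  simp only [h1]
  have hgd : Measurable fun x : ℝ => ENNReal.ofReal (gd s x) :=
    ENNReal.measurable_ofReal.comp (gd_cont s).measurable
  have hgF : Measurable fun y : ℝ => ENNReal.ofReal (gF q y) :=
    ENNReal.measurable_ofReal.comp (gF_cont q).measurable
  rw [gMeas, lintegral_withDensity_eq_lintegral_mul volume hgd hgF]
  have h2 : ∀ y : ℝ, (fun x => ENNReal.ofReal (gd s x)) y * ENNReal.ofReal (gF q y)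
      = ENNReal.ofReal (gF q y * gd s y) := by
    intro y
    rw [← ENNReal.ofReal_mul (by unfold gd gF; positivity)]
    ring_nf
  simp only [Pi.mul_apply, h2]
  rw [← ofReal_integral_eq_lintegral_ofReal (integrable_gF_mul_gd hq hs)
    (Filter.Eventually.of_forall fun y => mul_nonneg (Real.exp_nonneg _) (gd_nonneg hs y)),
    integral_gF_mul_gd hq hs]

lemma map_eq_gMeas {Ω : Type*} [MeasurableSpace Ω] (μ : Measure Ω) [IsProbabilityMeasure μ]
    {X : Ω → ℝ} (hX : Measurable X) {r : ℝ} (hr : 0 < r)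
    (hcdf : ∀ x, μ {ω | X ω ≤ x} = ENNReal.ofReal (gF r x)) : μ.map X = gMeas r := by
  haveI := gMeas_prob hr
  refine MeasureTheory.Measure.ext_of_Iic (μ.map X) (gMeas r) fun a => ?_
  rw [Measure.map_apply hX measurableSet_Iic, gMeas_Iic hr]
  exact hcdf a

lemma prob_lt_of_gumbel {Ω : Type*} [MeasurableSpace Ω] (μ : Measure Ω) [IsProbabilityMeasure μ]
    {X Y : Ω → ℝ} (hX : Measurable X) (hY : Measurable Y) (hind : IndepFun X Y μ)
    {q s : ℝ} (hq : 0 < q) (hs : 0 < s)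
    (hcX : ∀ x, μ {ω | X ω ≤ x} = ENNReal.ofReal (gF q x))
    (hcY : ∀ x, μ {ω | Y ω ≤ x} = ENNReal.ofReal (gF s x)) :
    μ {ω | X ω < Y ω} = ENNReal.ofReal (s / (q + s)) := by
  have hmap : μ.map (fun ω => (X ω, Y ω)) = (μ.map X).prod (μ.map Y) :=
    (indepFun_iff_map_prod_eq_prod_map_map hX.aemeasurable hY.aemeasurable).mp hind
  have hset : {ω | X ω < Y ω} = (fun ω => (X ω, Y ω)) ⁻¹' {p : ℝ × ℝ | p.1 < p.2} := rfl
  rw [hset, ← Measure.map_apply (hX.prodMk hY)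
    (measurableSet_lt measurable_fst measurable_snd), hmap,
    map_eq_gMeas μ hX hq hcX, map_eq_gMeas μ hY hs hcY, gMeas_prod_lt hq hs]

lemma sup'_attach_eq {α β : Type*} [LinearOrder β] (s : Finset α) (h : s.Nonempty)
    (h2 : s.attach.Nonempty) (g : α → β) :
    s.attach.sup' h2 (fun c => g c.1) = s.sup' h g := by
  apply le_antisymm
  · rw [Finset.sup'_le_iff]
    intro b _
    exact Finset.le_sup' g b.2
  · rw [Finset.sup'_le_iff]
    intro b hb
    exact Finset.le_sup' (fun c : {x // x ∈ s} => g c.1) (Finset.mem_attach _ ⟨b, hb⟩)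


end GumbelAux

open Real Set Filter in
/-- sorting the tokens in decreasing order of `log (w t) + U t` with
`(U_t)` i.i.d. standard Gumbel, the expected rank `N` of the first element of the
nonempty subset `C` (the number of elements examined until an element of `C` is reached)
satisfies `E[N] ≤ 1/q`, where `q = Σ_{t ∈ C} w t`, with strict inequality when `C ≠ V`.
(The rank of the first element of `C` is `1` plus the number of elements whose perturbed
log-weight strictly exceeds that of every element of `C`.) -/
theorem gumbel_max_expected_rank
    {V : Type*} [Fintype V] [Nonempty V]
    {Ω : Type*} [MeasurableSpace Ω] (μ : Measure Ω) [IsProbabilityMeasure μ]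
    -- `w` is a probability vector with positive entries
    (w : V → ℝ) (hw : ∀ t : V, 0 < w t) (hw_sum : ∑ t : V, w t = 1)
    (C : Finset V) (hC : C.Nonempty)
    (U : V → Ω → ℝ)
    (hUmeas : ∀ t : V, Measurable (U t))
    -- the `U t` are independent ...
    (hindep : iIndepFun U μ)
    -- ... and each is standard Gumbel distributed (CDF `exp (−exp (−x))`)
    (hgumbel : ∀ (t : V) (x : ℝ),
      μ {ω | U t ω ≤ x} = ENNReal.ofReal (Real.exp (-Real.exp (-x))))
    -- `N ω` is the rank (counting from 1) of the first element of `C` in the decreasing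
    -- ordering of the perturbed log-weights
    (N : Ω → ℕ)
    (hN : ∀ ω : Ω, N ω = 1 + (Finset.univ.filter (fun t : V => t ∉ C ∧
      ∀ c ∈ C, Real.log (w c) + U c ω < Real.log (w t) + U t ω)).card) :
    (∫ ω, (N ω : ℝ) ∂μ) ≤ 1 / (∑ t ∈ C, w t) ∧
    (C ≠ Finset.univ → (∫ ω, (N ω : ℝ) ∂μ) < 1 / (∑ t ∈ C, w t)) := by
  classical
  set q : ℝ := ∑ t ∈ C, w t with hqdef
  have hq : 0 < q := Finset.sum_pos (fun t _ => hw t) hC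
  set Z : V → Ω → ℝ := fun t ω => Real.log (w t) + U t ω with hZ
  have hZmeas : ∀ t, Measurable (Z t) := fun t => measurable_const.add (hUmeas t)
  have hZset : ∀ (t : V) (x : ℝ),
      {ω | Z t ω ≤ x} = U t ⁻¹' (Iic (x - Real.log (w t))) := by
    intro t x
    ext ω
    simp only [hZ, Set.mem_setOf_eq, Set.mem_preimage, Set.mem_Iic]
    constructor <;> intro <;> linarith
  have hZcdf : ∀ (t : V) (x : ℝ), μ {ω | Z t ω ≤ x} = ENNReal.ofReal (gF (w t) x) := by
    intro t x
    have h2 : U t ⁻¹' (Iic (x - Real.log (w t))) = {ω | U t ω ≤ x - Real.log (w t)} := rfl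
    rw [hZset, h2, hgumbel]
    unfold gF
    congr 2
    rw [show -(x - Real.log (w t)) = Real.log (w t) + -x by ring, Real.exp_add,
      Real.exp_log (hw t)]
    ring
  have hCa : C.attach.Nonempty := Finset.attach_nonempty_iff.mpr hC
  set M : Ω → ℝ := fun ω => C.sup' hC (fun c => Z c ω) with hM
  have hMeq' : M = C.sup' hC Z := by
    funext ω
    rw [hM, Finset.sup'_apply]
  have hMmeas : Measurable M := by
    rw [hMeq']
    exact Finset.measurable_sup' hC (fun c _ => hZmeas c)
  have hMcdf : ∀ x : ℝ, μ {ω | M ω ≤ x} = ENNReal.ofReal (gF q x) := by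
    intro x
    have h1 : {ω | M ω ≤ x} = ⋂ c ∈ C, {ω | Z c ω ≤ x} := by
      ext ω
      simp only [hM, Set.mem_setOf_eq, Finset.sup'_le_iff, Set.mem_iInter]
    rw [h1, hindep.meas_biInter (fun c hc => ⟨Iic (x - Real.log (w c)), measurableSet_Iic,
      (hZset c x).symm⟩)]
    calc ∏ c ∈ C, μ {ω | Z c ω ≤ x}
        = ∏ c ∈ C, ENNReal.ofReal (gF (w c) x) := Finset.prod_congr rfl fun c _ => hZcdf c x
      _ = ENNReal.ofReal (∏ c ∈ C, gF (w c) x) :=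
          (ENNReal.ofReal_prod_of_nonneg fun i _ => (Real.exp_pos _).le).symm
      _ = ENNReal.ofReal (gF q x) := by
          congr 1
          unfold gF
          rw [← Real.exp_sum]
          congr 1
          rw [← Finset.sum_mul, ← Finset.sum_neg_distrib]
  have hMind : ∀ t ∉ C, IndepFun M (Z t) μ := by
    intro t ht
    have h1 := hindep.indepFun_finset C {t} (Finset.disjoint_singleton_right.mpr ht) hUmeas
    set φ : ({x // x ∈ C} → ℝ) → ℝ :=
      fun v => C.attach.sup' hCa (fun c => Real.log (w c.1) + v c) with hφdef
    set ψ : ({x // x ∈ ({t} : Finset V)} → ℝ) → ℝ :=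
      fun v => Real.log (w t) + v ⟨t, Finset.mem_singleton_self t⟩ with hψdef
    have hφ : Measurable φ := by
      have h3 : φ = C.attach.sup' hCa
          (fun c (v : {x // x ∈ C} → ℝ) => Real.log (w c.1) + v c) := by
        funext v
        rw [hφdef, Finset.sup'_apply]
      rw [h3]
      exact Finset.measurable_sup' hCa
        (fun c _ => measurable_const.add (measurable_pi_apply c))
    have hψ : Measurable ψ := measurable_const.add (measurable_pi_apply _)
    have h2 := h1.comp hφ hψ
    have hMeq : φ ∘ (fun a (i : C) => U i a) = M := by
      funext ω
      simp only [Function.comp_apply, hφdef, hM, hZ]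
      exact sup'_attach_eq C hC hCa (fun c => Real.log (w c) + U c ω)
    have hZteq : ψ ∘ (fun a (i : ({t} : Finset V)) => U i a) = Z t := by
      funext ω
      simp only [Function.comp_apply, hψdef, hZ]
    rwa [hMeq, hZteq] at h2
  -- the events
  set A : V → Set Ω := fun t => {ω | t ∉ C ∧ ∀ c ∈ C, Z c ω < Z t ω} with hA
  have hAeq : ∀ t ∉ C, A t = {ω | M ω < Z t ω} := by
    intro t ht
    ext ω
    simp only [hA, Set.mem_setOf_eq, hM, Finset.sup'_lt_iff]
    tauto
  have hAC : ∀ t ∈ C, A t = ∅ := by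
    intro t ht
    ext ω
    simp only [hA, Set.mem_setOf_eq, Set.mem_empty_iff_false, iff_false]
    tauto
  have hAmeas : ∀ t, MeasurableSet (A t) := by
    intro t
    by_cases ht : t ∈ C
    · rw [hAC t ht]; exact MeasurableSet.empty
    · rw [hAeq t ht]; exact measurableSet_lt hMmeas (hZmeas t)
  have hAprob : ∀ t ∉ C, μ (A t) = ENNReal.ofReal (w t / (q + w t)) := by
    intro t ht
    rw [hAeq t ht]
    exact prob_lt_of_gumbel μ hMmeas (hZmeas t) (hMind t ht) hq (hw t) hMcdf (hZcdf t)
  -- integral of N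
  have hNint : (∫ ω, (N ω : ℝ) ∂μ) = 1 + ∑ t : V, (μ (A t)).toReal := by
    have hNform : (fun ω => (N ω : ℝ))
        = fun ω => 1 + ∑ t : V, Set.indicator (A t) (fun _ => (1:ℝ)) ω := by
      funext ω
      rw [hN ω]
      push_cast
      congr 1
      rw [Finset.card_filter]
      push_cast
      refine Finset.sum_congr rfl fun t _ => ?_
      by_cases h : ω ∈ A t
      · rw [Set.indicator_of_mem h, if_pos]
        exact h
      · rw [Set.indicator_of_notMem h, if_neg]
        exact h
    rw [hNform]
    rw [integral_add (integrable_const 1)]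
    · rw [integral_const, smul_eq_mul, mul_one, probReal_univ]
      congr 1
      rw [integral_finset_sum]
      · refine Finset.sum_congr rfl fun t _ => ?_
        rw [integral_indicator_const (1:ℝ) (hAmeas t), smul_eq_mul, mul_one, measureReal_def]
      · exact fun t _ => (integrable_const (1:ℝ)).indicator (hAmeas t)
    · exact integrable_finset_sum _ fun t _ => (integrable_const (1:ℝ)).indicator (hAmeas t)
  have hval : ∑ t : V, (μ (A t)).toReal = ∑ t ∈ Cᶜ, w t / (q + w t) := by
    rw [← Finset.sum_compl_add_sum C fun t => (μ (A t)).toReal]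
    have h0 : ∑ t ∈ C, (μ (A t)).toReal = 0 :=
      Finset.sum_eq_zero fun t ht => by rw [hAC t ht]; simp
    rw [h0, add_zero]
    refine Finset.sum_congr rfl fun t ht => ?_
    rw [Finset.mem_compl] at ht
    rw [hAprob t ht, ENNReal.toReal_ofReal
      (le_of_lt (div_pos (hw t) (by linarith [hw t])))]
  have hcomp : ∑ t ∈ Cᶜ, w t = 1 - q := by
    have h1 := Finset.sum_compl_add_sum C w
    rw [hw_sum] at h1
    rw [hqdef]
    linarith [h1]
  have hterm : ∀ t ∈ Cᶜ, w t / (q + w t) < w t / q := by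
    intro t _
    apply div_lt_div_of_pos_left (hw t) hq
    linarith [hw t]
  have hsumq : ∑ t ∈ Cᶜ, w t / q = (1 - q) / q := by
    rw [← Finset.sum_div, hcomp]
  have hle : ∑ t ∈ Cᶜ, w t / (q + w t) ≤ (1 - q) / q := by
    rw [← hsumq]
    exact Finset.sum_le_sum fun t ht => (hterm t ht).le
  have hkey : (1 : ℝ) + (1 - q) / q = 1 / q := by
    field_simp
    ring
  rw [hNint, hval]
  constructor
  · rw [← hkey]
    linarith [hle]
  · intro hne
    have hne' : (Cᶜ : Finset V).Nonempty := by
      rw [← Finset.card_pos, Finset.card_compl]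
      have : C.card < Fintype.card V := by
        refine lt_of_le_of_ne (Finset.card_le_univ C) ?_
        intro h
        exact hne (Finset.eq_univ_of_card C h)
      omega
    have hlt : ∑ t ∈ Cᶜ, w t / (q + w t) < (1 - q) / q := by
      rw [← hsumq]
      exact Finset.sum_lt_sum_of_nonempty hne' hterm
    rw [← hkey]
    linarith [hlt]
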